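/- Bounded client drift over local steps: suppose each client k performs i − i₀ < I local SGD steps from a common point w̄^{i₀} = w_k^{i₀} with stochastic gradients of squared norm bounded in expectation by H², using non-increasing step sizes with η_{i₀} ≤ 2η_i. Then the expected weighted divergence satisfies E[Σ_k s_k ‖w̄^i − w_k^i‖²] ≤ 4 η_i² (I−1)² H², where w̄^i = Σ_k s_k w_k^i and Σ_k s_k = 1, s_k ≥ 0. -/

import Mathlib

open Finset

lemma norm_sum_sq_le_card {E : Type*} [NormedAddCommGroup E]
    (T : Finset ℕ) (h : ℕ → E) :
    ‖∑ j ∈ T, h j‖ ^ 2 ≤ (T.card : ℝ) * ∑ j ∈ T, ‖h j‖ ^ 2 := by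
  calc ‖∑ j ∈ T, h j‖ ^ 2 ≤ (∑ j ∈ T, ‖h j‖) ^ 2 := by
        apply pow_le_pow_left₀ (norm_nonneg _) (norm_sum_le _ _)
    _ ≤ (T.card : ℝ) * ∑ j ∈ T, ‖h j‖ ^ 2 := sq_sum_le_card_mul_sum_sq

lemma weighted_var_le {K : ℕ} {E : Type*} [NormedAddCommGroup E]
    [InnerProductSpace ℝ E]
    (s : Fin K → ℝ) (hssum : ∑ k, s k = 1) (v : Fin K → E) :
    ∑ k, s k * ‖v k - ∑ k', s k' • v k'‖ ^ 2 ≤ ∑ k, s k * ‖v k‖ ^ 2 := by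
  set m := ∑ k', s k' • v k' with hm
  have hinner : ∑ k, s k * (inner ℝ (v k) m : ℝ) = ‖m‖ ^ 2 := by
    rw [← real_inner_self_eq_norm_sq, hm, sum_inner]
    exact Finset.sum_congr rfl fun k _ => by rw [real_inner_smul_left]
  have hexp : ∀ k, ‖v k - m‖ ^ 2 = ‖v k‖ ^ 2 - 2 * (inner ℝ (v k) m : ℝ) + ‖m‖ ^ 2 :=
    fun k => norm_sub_sq_real _ _
  calc ∑ k, s k * ‖v k - m‖ ^ 2
      = ∑ k, s k * ‖v k‖ ^ 2 - 2 * ∑ k, s k * (inner ℝ (v k) m : ℝ)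
        + (∑ k, s k) * ‖m‖ ^ 2 := by
        simp only [hexp]; rw [Finset.sum_mul, Finset.mul_sum]
        rw [← Finset.sum_sub_distrib, ← Finset.sum_add_distrib]
        exact Finset.sum_congr rfl fun k _ => by ring
    _ = ∑ k, s k * ‖v k‖ ^ 2 - ‖m‖ ^ 2 := by rw [hinner, hssum]; ring
    _ ≤ ∑ k, s k * ‖v k‖ ^ 2 := sub_le_self _ (by positivity)

lemma swap_weight {α β : Type*} (u : Finset α) (t : Finset β)
    (a : α → ℝ) (b : β → ℝ) (c : β → α → ℝ) :
    ∑ ω ∈ u, a ω * ∑ k ∈ t, b k * c k ω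
      = ∑ k ∈ t, b k * ∑ ω ∈ u, a ω * c k ω := by
  simp_rw [Finset.mul_sum]
  rw [Finset.sum_comm]
  exact Finset.sum_congr rfl fun k _ => Finset.sum_congr rfl fun ω _ => by ring

/-- Bounded client drift over local SGD steps between
synchronizations. Randomness is modeled by a finite probability space `Ω`. -/
theorem bounded_client_drift
    {d K : ℕ} {Ω : Type*} [Fintype Ω]
    (p : Ω → ℝ) (hp : ∀ ω, 0 ≤ p ω) (hpsum : ∑ ω, p ω = 1)
    (I i₀ i : ℕ) (hI : 1 ≤ I) (hi₀ : i₀ ≤ i) (hgap : i - i₀ < I)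
    (η : ℕ → ℝ) (hηpos : ∀ j, 0 < η j)
    (hηmono : ∀ j j', j ≤ j' → η j' ≤ η j) (hη2 : η i₀ ≤ 2 * η i)
    (w : Fin K → ℕ → Ω → EuclideanSpace ℝ (Fin d))
    (g : Fin K → ℕ → Ω → EuclideanSpace ℝ (Fin d))
    (wbar0 : EuclideanSpace ℝ (Fin d))
    (hsync : ∀ k ω, w k i₀ ω = wbar0)
    (hupdate : ∀ k ω, ∀ j, i₀ ≤ j → j < i →
      w k (j + 1) ω = w k j ω - η j • g k j ω)
    (H : ℝ)
    (hgrad : ∀ k j, ∑ ω, p ω * ‖g k j ω‖ ^ 2 ≤ H ^ 2)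
    (s : Fin K → ℝ) (hs : ∀ k, 0 ≤ s k) (hssum : ∑ k, s k = 1) :
    ∑ ω, p ω * ∑ k, s k * ‖(∑ k', s k' • w k' i ω) - w k i ω‖ ^ 2
      ≤ 4 * η i ^ 2 * ((I : ℝ) - 1) ^ 2 * H ^ 2 := by
  set T : Finset ℕ := Finset.Ico i₀ i with hT
  have hcard : (T.card : ℝ) = (i - i₀ : ℕ) := by rw [hT, Nat.card_Ico]
  -- telescoping
  have htel : ∀ k ω m, i₀ ≤ m → m ≤ i →
      w k m ω = wbar0 - ∑ j ∈ Finset.Ico i₀ m, η j • g k j ω := by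
    intro k ω m hm
    induction m, hm using Nat.le_induction with
    | base => intro _; simp [hsync k ω]
    | succ m hm ih =>
      intro hmi
      rw [hupdate k ω m hm (by omega), ih (by omega),
        Finset.sum_Ico_succ_top hm, sub_sub]
  -- difference formula
  have hdiff : ∀ k ω, (∑ k', s k' • w k' i ω) - w k i ω
      = ∑ j ∈ T, η j • (g k j ω - ∑ k', s k' • g k' j ω) := by
    intro k ω
    have e1 : ∀ k', w k' i ω = wbar0 - ∑ j ∈ T, η j • g k' j ω :=
      fun k' => htel k' ω i hi₀ le_rfl
    have hswap : ∑ k', s k' • ∑ j ∈ T, η j • g k' j ω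
        = ∑ j ∈ T, η j • ∑ k', s k' • g k' j ω := by
      simp_rw [Finset.smul_sum]
      rw [Finset.sum_comm]
      exact Finset.sum_congr rfl fun j _ =>
        Finset.sum_congr rfl fun k' _ => smul_comm _ _ _
    simp only [e1, smul_sub, Finset.sum_sub_distrib, ← Finset.sum_smul, hssum,
      one_smul, hswap]
    abel
  -- step size bound
  have hηb : ∀ j ∈ T, η j ^ 2 ≤ 4 * η i ^ 2 := by
    intro j hj
    rw [hT, Finset.mem_Ico] at hj
    have h1 : η j ≤ 2 * η i := le_trans (hηmono i₀ j hj.1) hη2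
    have h2 : 0 ≤ η j := (hηpos j).le
    calc η j ^ 2 ≤ (2 * η i) ^ 2 := pow_le_pow_left₀ h2 h1 2
      _ = 4 * η i ^ 2 := by ring
  -- pointwise (in ω) bound
  have hA : ∀ ω, ∑ k, s k * ‖(∑ k', s k' • w k' i ω) - w k i ω‖ ^ 2
      ≤ (T.card : ℝ) * (4 * η i ^ 2) * ∑ j ∈ T, ∑ k, s k * ‖g k j ω‖ ^ 2 := by
    intro ω
    have step1 : ∀ k, ‖(∑ k', s k' • w k' i ω) - w k i ω‖ ^ 2
        ≤ (T.card : ℝ) * ∑ j ∈ T, η j ^ 2 * ‖g k j ω - ∑ k', s k' • g k' j ω‖ ^ 2 := by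
      intro k
      rw [hdiff k ω]
      refine le_trans (norm_sum_sq_le_card T _) ?_
      apply mul_le_mul_of_nonneg_left _ (Nat.cast_nonneg _)
      apply le_of_eq
      exact Finset.sum_congr rfl fun j _ => by
        rw [norm_smul, mul_pow, Real.norm_eq_abs, sq_abs]
    calc ∑ k, s k * ‖(∑ k', s k' • w k' i ω) - w k i ω‖ ^ 2
        ≤ ∑ k, s k * ((T.card : ℝ) *
            ∑ j ∈ T, η j ^ 2 * ‖g k j ω - ∑ k', s k' • g k' j ω‖ ^ 2) :=
          Finset.sum_le_sum fun k _ =>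
            mul_le_mul_of_nonneg_left (step1 k) (hs k)
      _ = (T.card : ℝ) * ∑ j ∈ T, η j ^ 2 *
            ∑ k, s k * ‖g k j ω - ∑ k', s k' • g k' j ω‖ ^ 2 := by
          rw [Finset.mul_sum]
          simp_rw [← mul_assoc, mul_comm (s _) (T.card : ℝ), mul_assoc,
            ← Finset.mul_sum]
          congr 1
          rw [swap_weight Finset.univ T s (fun j => η j ^ 2)
            (fun j k => ‖g k j ω - ∑ k', s k' • g k' j ω‖ ^ 2)]
      _ ≤ (T.card : ℝ) * ∑ j ∈ T, (4 * η i ^ 2) *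
            ∑ k, s k * ‖g k j ω‖ ^ 2 := by
          apply mul_le_mul_of_nonneg_left _ (Nat.cast_nonneg _)
          refine Finset.sum_le_sum fun j hj => ?_
          have hv := weighted_var_le s hssum (fun k => g k j ω)
          have hnn : 0 ≤ ∑ k, s k * ‖g k j ω - ∑ k', s k' • g k' j ω‖ ^ 2 :=
            Finset.sum_nonneg fun k _ => mul_nonneg (hs k) (by positivity)
          calc η j ^ 2 * ∑ k, s k * ‖g k j ω - ∑ k', s k' • g k' j ω‖ ^ 2
              ≤ (4 * η i ^ 2) * ∑ k, s k * ‖g k j ω - ∑ k', s k' • g k' j ω‖ ^ 2 :=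
                mul_le_mul_of_nonneg_right (hηb j hj) hnn
            _ ≤ (4 * η i ^ 2) * ∑ k, s k * ‖g k j ω‖ ^ 2 :=
                mul_le_mul_of_nonneg_left hv (by positivity)
      _ = (T.card : ℝ) * (4 * η i ^ 2) * ∑ j ∈ T, ∑ k, s k * ‖g k j ω‖ ^ 2 := by
          rw [← Finset.mul_sum]; ring
  -- combine over ω
  have hB : ∑ j ∈ T, ∑ k, s k * ∑ ω, p ω * ‖g k j ω‖ ^ 2 ≤ (T.card : ℝ) * H ^ 2 := by
    have hH2 : 0 ≤ H ^ 2 := sq_nonneg H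
    calc ∑ j ∈ T, ∑ k, s k * ∑ ω, p ω * ‖g k j ω‖ ^ 2
        ≤ ∑ j ∈ T, ∑ k, s k * H ^ 2 :=
          Finset.sum_le_sum fun j _ => Finset.sum_le_sum fun k _ =>
            mul_le_mul_of_nonneg_left (hgrad k j) (hs k)
      _ = (T.card : ℝ) * H ^ 2 := by
          simp [← Finset.sum_mul, hssum, Finset.sum_const, nsmul_eq_mul]
  have key : ∑ ω, p ω * ∑ k, s k * ‖(∑ k', s k' • w k' i ω) - w k i ω‖ ^ 2
      ≤ (T.card : ℝ) * (4 * η i ^ 2) * ((T.card : ℝ) * H ^ 2) := by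
    calc ∑ ω, p ω * ∑ k, s k * ‖(∑ k', s k' • w k' i ω) - w k i ω‖ ^ 2
        ≤ ∑ ω, p ω * ((T.card : ℝ) * (4 * η i ^ 2) *
            ∑ j ∈ T, ∑ k, s k * ‖g k j ω‖ ^ 2) :=
          Finset.sum_le_sum fun ω _ =>
            mul_le_mul_of_nonneg_left (hA ω) (hp ω)
      _ = (T.card : ℝ) * (4 * η i ^ 2) *
            ∑ ω, p ω * ∑ j ∈ T, ∑ k, s k * ‖g k j ω‖ ^ 2 := by
          rw [Finset.mul_sum]
          exact Finset.sum_congr rfl fun ω _ => by ring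
      _ = (T.card : ℝ) * (4 * η i ^ 2) *
            ∑ j ∈ T, ∑ k, s k * ∑ ω, p ω * ‖g k j ω‖ ^ 2 := by
          congr 1
          calc ∑ ω, p ω * ∑ j ∈ T, ∑ k, s k * ‖g k j ω‖ ^ 2
              = ∑ j ∈ T, ∑ ω, p ω * ∑ k, s k * ‖g k j ω‖ ^ 2 := by
                simp_rw [Finset.mul_sum]; exact Finset.sum_comm
            _ = ∑ j ∈ T, ∑ k, s k * ∑ ω, p ω * ‖g k j ω‖ ^ 2 :=
                Finset.sum_congr rfl fun j _ =>
                  swap_weight Finset.univ Finset.univ p s (fun k ω => ‖g k j ω‖ ^ 2)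
      _ ≤ (T.card : ℝ) * (4 * η i ^ 2) * ((T.card : ℝ) * H ^ 2) :=
          mul_le_mul_of_nonneg_left hB (by positivity)
  refine le_trans key ?_
  have hn : (T.card : ℝ) ≤ (I : ℝ) - 1 := by
    rw [hcard]
    have : (i - i₀ : ℕ) + 1 ≤ I := hgap
    have := Nat.cast_le (α := ℝ) |>.mpr this
    push_cast at this ⊢
    linarith
  have hn0 : (0:ℝ) ≤ (T.card : ℝ) := Nat.cast_nonneg _
  have hsq : (T.card : ℝ) * (T.card : ℝ) ≤ ((I : ℝ) - 1) ^ 2 := by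
    rw [sq]
    exact mul_le_mul hn hn hn0 (by linarith)
  calc (T.card : ℝ) * (4 * η i ^ 2) * ((T.card : ℝ) * H ^ 2)
      = ((T.card : ℝ) * (T.card : ℝ)) * (4 * η i ^ 2 * H ^ 2) := by ring
    _ ≤ ((I : ℝ) - 1) ^ 2 * (4 * η i ^ 2 * H ^ 2) :=
        mul_le_mul_of_nonneg_right hsq (by positivity)
    _ = 4 * η i ^ 2 * ((I : ℝ) - 1) ^ 2 * H ^ 2 := by ring
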